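/- Let X1 ∈ ℝ^{n×N}, Z0 ∈ ℝ^{s×N} with Z0 of full row rank, J ∈ ℝ^{s×n}, and L ∈ ℝ^{n×s} a left inverse of J (L·J = I_n). Suppose P ∈ ℝ^{n×n} is symmetric and Y ∈ ℝ^{N×n} is such that the 2n×2n block matrix [[P, X1·Y], [Yᵀ·X1ᵀ, P]] is positive definite and J·P = Z0·Y. Define Z0⁺ := Z0ᵀ·(Z0·Z0ᵀ)⁻¹, G := Z0⁺ + (I_N − Z0⁺·Z0)·Y·P⁻¹·L, and F := X1·G. Then: (i) P is positive definite; (ii) Z0·G = I_s; and (iii) F·J·P·(F·J)ᵀ − P is negative definite. -/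

import Mathlib

open Matrix

/-- A square real matrix of full rank is a unit. -/
lemma aux_isUnit_of_rank {s : ℕ} (M : Matrix (Fin s) (Fin s) ℝ)
    (h : M.rank = s) : IsUnit M := by
  rw [← Matrix.mulVec_surjective_iff_isUnit]
  have hrange : LinearMap.range M.mulVecLin = ⊤ := by
    apply Submodule.eq_top_of_finrank_eq
    rw [Matrix.rank] at h
    simp [h]
  intro v
  obtain ⟨w, hw⟩ := LinearMap.range_eq_top.mp hrange v
  exact ⟨w, hw⟩

/-- LMI-based data-driven stabilization via linearization: if `Z0` has full row rank,
`L J = I`, `P` is symmetric, the block matrix `[[P, X1 Y], [Yᵀ X1ᵀ, P]]` is positive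
definite and `J P = Z0 Y`, then with `Z0⁺ = Z0ᵀ (Z0 Z0ᵀ)⁻¹`,
`G = Z0⁺ + (I - Z0⁺ Z0) Y P⁻¹ L` and `F = X1 G` we have: `P` is positive definite,
`Z0 G = I`, and `F J P (F J)ᵀ - P` is negative definite. -/
theorem stmt14 (n s N : ℕ)
    (X1 : Matrix (Fin n) (Fin N) ℝ) (Z0 : Matrix (Fin s) (Fin N) ℝ)
    (J : Matrix (Fin s) (Fin n) ℝ) (L : Matrix (Fin n) (Fin s) ℝ)
    (hZ0 : Z0.rank = s) (hL : L * J = 1)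
    (P : Matrix (Fin n) (Fin n) ℝ) (Y : Matrix (Fin N) (Fin n) ℝ)
    (hPsymm : P.IsSymm)
    (hblk : (Matrix.fromBlocks P (X1 * Y) (Yᵀ * X1ᵀ) P).PosDef)
    (hJP : J * P = Z0 * Y)
    (Z0p : Matrix (Fin N) (Fin s) ℝ) (hZ0p : Z0p = Z0ᵀ * (Z0 * Z0ᵀ)⁻¹)
    (G : Matrix (Fin N) (Fin s) ℝ)
    (hG : G = Z0p + ((1 : Matrix (Fin N) (Fin N) ℝ) - Z0p * Z0) * Y * P⁻¹ * L)
    (F : Matrix (Fin n) (Fin s) ℝ) (hF : F = X1 * G) :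
    P.PosDef ∧
    Z0 * G = 1 ∧
    (∀ x : Fin n → ℝ, x ≠ 0 →
      x ⬝ᵥ ((F * J * P * (F * J)ᵀ - P).mulVec x) < 0) := by
  -- conjugate transpose equals transpose over ℝ
  have hBH : (X1 * Y)ᴴ = Yᵀ * X1ᵀ := by
    rw [conjTranspose_mul]
    congr 1
  -- P is positive definite
  have hP : P.PosDef := by
    refine Matrix.PosDef.of_dotProduct_mulVec_pos ?_ ?_
    · exact hPsymm
    · intro x hx
      have hx' : (Sum.elim x 0 : Fin n ⊕ Fin n → ℝ) ≠ 0 := by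
        intro h
        apply hx
        funext i
        have := congrFun h (Sum.inl i)
        simpa using this
      have := hblk.dotProduct_mulVec_pos hx'
      simpa [fromBlocks_mulVec, dotProduct] using this
  have hPdet : IsUnit P.det := isUnit_iff_ne_zero.mpr hP.det_pos.ne'
  have hPinv : P⁻¹ * P = 1 := Matrix.nonsing_inv_mul P hPdet
  have hPinv' : P * P⁻¹ = 1 := Matrix.mul_nonsing_inv P hPdet
  -- Z0 * Z0ᵀ is invertible
  have hZZ : IsUnit (Z0 * Z0ᵀ) := by
    apply aux_isUnit_of_rank
    rw [Matrix.rank_self_mul_transpose, hZ0]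
  have hZZdet : IsUnit (Z0 * Z0ᵀ).det := (Matrix.isUnit_iff_isUnit_det _).mp hZZ
  have hZZ0p : Z0 * Z0p = 1 := by
    rw [hZ0p, ← Matrix.mul_assoc]
    exact Matrix.mul_nonsing_inv _ hZZdet
  -- Z0 * G = 1
  have hZG : Z0 * G = 1 := by
    rw [hG]
    rw [Matrix.mul_add]
    have : Z0 * (((1 : Matrix (Fin N) (Fin N) ℝ) - Z0p * Z0) * Y * P⁻¹ * L) = 0 := by
      have h1 : Z0 * ((1 : Matrix (Fin N) (Fin N) ℝ) - Z0p * Z0) = 0 := by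
        rw [Matrix.mul_sub, Matrix.mul_one, ← Matrix.mul_assoc, hZZ0p, Matrix.one_mul, sub_self]
      calc Z0 * (((1 : Matrix (Fin N) (Fin N) ℝ) - Z0p * Z0) * Y * P⁻¹ * L)
          = (Z0 * ((1 : Matrix (Fin N) (Fin N) ℝ) - Z0p * Z0)) * Y * P⁻¹ * L := by
            simp only [Matrix.mul_assoc]
        _ = 0 := by rw [h1]; simp
    rw [this, hZZ0p, add_zero]
  refine ⟨hP, hZG, ?_⟩
  -- key identity : F * J * P = X1 * Y
  have hKP : F * J * P = X1 * Y := by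
    rw [hF, hG]
    have hGJP : (Z0p + ((1 : Matrix (Fin N) (Fin N) ℝ) - Z0p * Z0) * Y * P⁻¹ * L) * J * P
        = Z0p * (Z0 * Y) + ((1 : Matrix (Fin N) (Fin N) ℝ) - Z0p * Z0) * Y := by
      rw [Matrix.add_mul, Matrix.add_mul]
      congr 1
      · rw [Matrix.mul_assoc, hJP]
      · have : ((1 : Matrix (Fin N) (Fin N) ℝ) - Z0p * Z0) * Y * P⁻¹ * L * J * P
            = ((1 : Matrix (Fin N) (Fin N) ℝ) - Z0p * Z0) * Y * P⁻¹ * (L * J) * P := by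
          simp only [Matrix.mul_assoc]
        rw [this, hL, Matrix.mul_one, Matrix.mul_assoc _ P⁻¹ P, hPinv, Matrix.mul_one]
    calc X1 * (Z0p + ((1 : Matrix (Fin N) (Fin N) ℝ) - Z0p * Z0) * Y * P⁻¹ * L) * J * P
        = X1 * ((Z0p + ((1 : Matrix (Fin N) (Fin N) ℝ) - Z0p * Z0) * Y * P⁻¹ * L) * J * P) := by
          simp only [Matrix.mul_assoc]
      _ = X1 * (Z0p * (Z0 * Y) + ((1 : Matrix (Fin N) (Fin N) ℝ) - Z0p * Z0) * Y) := by
          rw [hGJP]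
      _ = X1 * Y := by
          congr 1
          rw [Matrix.sub_mul, Matrix.one_mul, ← Matrix.mul_assoc]
          abel
  set B := X1 * Y with hB
  -- F J P (F J)ᵀ = B P⁻¹ Bᵀ
  have hPt : Pᵀ = P := hPsymm
  have hconj : F * J * P * (F * J)ᵀ = B * P⁻¹ * Bᵀ := by
    have h1 : P * (F * J)ᵀ = Bᵀ := by
      rw [← hKP, show (F * J * P)ᵀ = Pᵀ * (F * J)ᵀ from Matrix.transpose_mul _ _, hPt]
    calc F * J * P * (F * J)ᵀ
        = F * J * (P * P⁻¹) * (P * (F * J)ᵀ) := by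
          rw [hPinv', Matrix.mul_one]; simp only [Matrix.mul_assoc]
      _ = B * P⁻¹ * Bᵀ := by
          rw [h1, ← hKP]; simp only [Matrix.mul_assoc, hPinv', Matrix.mul_one]
  -- Schur complement positivity
  haveI : Invertible P := P.invertibleOfIsUnitDet hPdet
  rw [← hBH] at hblk
  have hschur : (P - B * P⁻¹ * Bᴴ).PosDef := by
    refine Matrix.PosDef.of_dotProduct_mulVec_pos ?_ ?_
    · have hsub : (B * P⁻¹ * Bᴴ).IsHermitian := by
        have : (P⁻¹).IsHermitian := hP.1.inv
        exact Matrix.isHermitian_mul_mul_conjTranspose B this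
      exact hP.1.sub hsub
    · intro x hx
      have hkey := Matrix.schur_complement_eq₂₂ (α := ℝ) P B x (-((P⁻¹ * Bᴴ) *ᵥ x)) hP.1
      have hxy : (Sum.elim x (-((P⁻¹ * Bᴴ) *ᵥ x)) : Fin n ⊕ Fin n → ℝ) ≠ 0 := by
        intro h
        apply hx
        funext i
        have := congrFun h (Sum.inl i)
        simpa using this
      have hpos := hblk.dotProduct_mulVec_pos hxy
      rw [show ((P⁻¹ * Bᴴ) *ᵥ x + -((P⁻¹ * Bᴴ) *ᵥ x)) = 0 by abel] at hkey
      simp only [star_trivial] at hkey hpos ⊢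
      rw [Matrix.dotProduct_mulVec] at hpos ⊢
      rw [hkey] at hpos
      simpa using hpos
  intro x hx
  have hBT : Bᵀ = Bᴴ := by rw [hBH, hB, Matrix.transpose_mul]
  have heq : F * J * P * (F * J)ᵀ - P = -(P - B * P⁻¹ * Bᴴ) := by
    rw [hconj, hBT]
    abel
  rw [heq]
  have := hschur.dotProduct_mulVec_pos hx
  simp only [star_trivial] at this
  rw [Matrix.neg_mulVec, dotProduct_neg]
  linarith
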